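/- Let U be a connected topological space, and let A₁, A₂ be open connected subsets of U, both nonempty and different from U. Suppose A₁ ∩ A₂ ≠ ∅, A₁ ∩ (U \ A₂) ≠ ∅, A₂ ∩ (U \ A₁) ≠ ∅, and the frontiers of A₁ and A₂ in U are connected and disjoint. Then U = A₁ ∪ A₂. -/
import Mathlib


/-- Lemma 1 (i): frontier containment for two overlapping open connected proper subsets
of a connected space with connected disjoint frontiers. -/
theorem union_eq_univ_of_chain_lemma
    (U : Type*) [TopologicalSpace U] [ConnectedSpace U]
    (A₁ A₂ : Set U)
    (h₁o : IsOpen A₁) (h₂o : IsOpen A₂)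
    (h₁c : IsConnected A₁) (h₂c : IsConnected A₂)
    (h₁ne : A₁ ≠ Set.univ) (h₂ne : A₂ ≠ Set.univ)
    (h12 : (A₁ ∩ A₂).Nonempty)
    (h1not2 : (A₁ ∩ A₂ᶜ).Nonempty)
    (h2not1 : (A₂ ∩ A₁ᶜ).Nonempty)
    (hf₁ : IsConnected (frontier A₁)) (hf₂ : IsConnected (frontier A₂))
    (hdisj : Disjoint (frontier A₁) (frontier A₂)) :
    A₁ ∪ A₂ = Set.univ := by
  -- Step 1: frontier A₁ ⊆ A₂
  have key : ∀ B₁ B₂ : Set U, IsOpen B₁ → IsOpen B₂ → IsConnected B₂ →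
      (B₁ ∩ B₂).Nonempty → (B₂ ∩ B₁ᶜ).Nonempty → Disjoint (frontier B₁) (frontier B₂) →
      IsConnected (frontier B₁) → frontier B₁ ⊆ B₂ := by
    intro B₁ B₂ hB₁o hB₂o hB₂c hmeet h2n1 hd hfc
    have hcover : frontier B₁ ⊆ B₂ ∪ (closure B₂)ᶜ := by
      intro x hx
      by_cases hxc : x ∈ closure B₂
      · rw [closure_eq_self_union_frontier] at hxc
        rcases hxc with h2 | h2
        · exact Or.inl h2
        · exact absurd h2 (Set.disjoint_left.1 hd hx)
      · exact Or.inr hxc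
    have hdisj2 : Disjoint B₂ (closure B₂)ᶜ :=
      Set.disjoint_left.2 fun x hx hxc => hxc (subset_closure hx)
    rcases hfc.isPreconnected.subset_or_subset hB₂o isClosed_closure.isOpen_compl hdisj2 hcover
      with h | h
    · exact h
    · -- frontier B₁ misses closure B₂, so closure B₂ ⊆ B₁ ∪ (closure B₁)ᶜ
      exfalso
      have hcov2 : closure B₂ ⊆ B₁ ∪ (closure B₁)ᶜ := by
        intro x hx
        by_cases hx1 : x ∈ closure B₁
        · rw [closure_eq_self_union_frontier] at hx1
          rcases hx1 with hx1 | hx1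
          · exact Or.inl hx1
          · exact absurd hx (h hx1)
        · exact Or.inr hx1
      have hdisj1 : Disjoint B₁ (closure B₁)ᶜ :=
        Set.disjoint_left.2 fun x hx hxc => hxc (subset_closure hx)
      have hsub : closure B₂ ⊆ B₁ := by
        refine (hB₂c.closure.isPreconnected).subset_left_of_subset_union hB₁o
          isClosed_closure.isOpen_compl hdisj1 hcov2 ?_
        obtain ⟨x, hx1, hx2⟩ := hmeet
        exact ⟨x, subset_closure hx2, hx1⟩
      obtain ⟨x, hx2, hx1⟩ := h2n1
      exact hx1 (hsub (subset_closure hx2))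
  have hF1 : frontier A₁ ⊆ A₂ := key A₁ A₂ h₁o h₂o h₂c h12 h2not1 hdisj hf₁
  have hF2 : frontier A₂ ⊆ A₁ := by
    refine key A₂ A₁ h₂o h₁o h₁c (by rwa [Set.inter_comm]) h1not2 hdisj.symm hf₂
  -- Step 2: A₁ ∪ A₂ is clopen and nonempty
  have hclosed : IsClosed (A₁ ∪ A₂) := by
    rw [← closure_eq_iff_isClosed]
    refine subset_antisymm ?_ subset_closure
    rw [closure_union]
    rintro x (hx | hx)
    · rw [closure_eq_self_union_frontier] at hx
      rcases hx with hx | hx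
      exacts [Or.inl hx, Or.inr (hF1 hx)]
    · rw [closure_eq_self_union_frontier] at hx
      rcases hx with hx | hx
      exacts [Or.inr hx, Or.inl (hF2 hx)]
  have hclopen : IsClopen (A₁ ∪ A₂) := ⟨hclosed, h₁o.union h₂o⟩
  rcases isClopen_iff.1 hclopen with h | h
  · obtain ⟨x, hx, _⟩ := h12
    exact absurd (h ▸ Or.inl hx : x ∈ (∅ : Set U)) (Set.notMem_empty x)
  · exact h
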